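/- Assume the abc conjecture holds with ε = 1/6, i.e., there are only finitely many triples (a,b,c) of coprime positive integers with a + b = c and c ≥ rad(abc)^{7/6}. Then there are only finitely many quadruples (s, n, b, q) of integers with s, b ≥ 2, n ≥ 3, q ≥ 3 such that n·s^n + 1 = (b^q - 1)/(b - 1). -/

import Mathlib

def rad (m : ℕ) : ℕ := ∏ p ∈ m.primeFactors, p

lemma rad_dvd (m : ℕ) : rad m ∣ m := Nat.prod_primeFactors_dvd m

lemma rad_le {m : ℕ} (hm : m ≠ 0) : rad m ≤ m :=
  Nat.le_of_dvd (Nat.pos_of_ne_zero hm) (rad_dvd m)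

lemma rad_pos (m : ℕ) : 0 < rad m := by
  apply Finset.prod_pos
  intro p hp
  exact (Nat.prime_of_mem_primeFactors hp).pos

lemma rad_mul_le {x y : ℕ} (hx : x ≠ 0) (hy : y ≠ 0) : rad (x * y) ≤ rad x * rad y := by
  unfold rad
  rw [Nat.primeFactors_mul hx hy]
  rw [Finset.union_comm, ← Finset.union_sdiff_self_eq_union,
    Finset.prod_union Finset.disjoint_sdiff, mul_comm]
  exact Nat.mul_le_mul (Finset.prod_le_prod_of_subset_of_one_le' Finset.sdiff_subset
      (fun i hi _ => (Nat.prime_of_mem_primeFactors hi).one_lt.le)) le_rfl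

lemma rad_pow (x : ℕ) {k : ℕ} (hk : k ≠ 0) : rad (x ^ k) = rad x := by
  unfold rad; rw [Nat.primeFactors_pow x hk]

lemma facts {s n b q : ℕ} (hs : 2 ≤ s) (hn : 3 ≤ n) (hb : 2 ≤ b) (hq : 3 ≤ q)
    (heq : (n * s ^ n + 1) * (b - 1) = b ^ q - 1) :
    ∃ c1 : ℕ, b ^ (q - 1) = c1 + 1 ∧ 3 ≤ c1 ∧ b ^ 2 ≤ c1 + 1 ∧
      c1 + 1 ≤ n * s ^ n ∧ n * s ^ n ≤ 2 * c1 ∧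
      rad (1 * c1 * (c1 + 1)) ≤ n * s * (b - 1) := by
  obtain ⟨b1, rfl⟩ : ∃ b1, b = b1 + 1 := ⟨b - 1, by omega⟩
  have hb1 : 1 ≤ b1 := by omega
  set M := n * s ^ n with hM
  have hMpos : 0 < M := by positivity
  have hb2c : (b1 + 1) ^ 2 ≤ (b1 + 1) ^ (q - 1) := Nat.pow_le_pow_right (by omega) (by omega)
  obtain ⟨c1, hc1⟩ : ∃ c1, (b1 + 1) ^ (q - 1) = c1 + 1 :=
    ⟨(b1 + 1) ^ (q - 1) - 1, by have := Nat.one_le_pow (q-1) (b1+1) (by omega); omega⟩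
  have hc13 : 3 ≤ c1 := by nlinarith [hb2c, hc1]
  have hbq : (b1 + 1) ^ q = (b1 + 1) * (c1 + 1) := by
    conv_lhs => rw [show q = 1 + (q - 1) by omega]
    rw [pow_add, pow_one, hc1]
  have h1 : (M + 1) * b1 + 1 = (b1 + 1) * (c1 + 1) := by
    rw [← hbq]
    have h2 : 1 ≤ (b1 + 1) ^ q := Nat.one_le_pow _ _ (by omega)
    have h3 : (M + 1) * ((b1 + 1) - 1) = (b1 + 1) ^ q - 1 := heq
    simp only [Nat.add_sub_cancel] at h3
    omega
  have key2 : M * b1 = (b1 + 1) * c1 := by nlinarith [h1]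
  have hcb : b1 ≤ c1 := by nlinarith [hb2c, hc1]
  have hcM : c1 + 1 ≤ M := by
    have : (c1 + 1) * b1 ≤ M * b1 := by nlinarith [key2, hcb]
    exact Nat.le_of_mul_le_mul_right this (by omega)
  have hM2c : M ≤ 2 * c1 := by
    have : M * b1 ≤ (2 * c1) * b1 := by nlinarith [key2]
    exact Nat.le_of_mul_le_mul_right this (by omega)
  have hradeq : rad (1 * c1 * (c1 + 1)) = rad (M * b1) := by
    have h1c : (1 : ℕ) * c1 * (c1 + 1) = c1 * (c1 + 1) := by ring
    unfold rad
    rw [h1c]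
    have e1 : (c1 * (c1 + 1)).primeFactors = (M * b1).primeFactors := by
      rw [Nat.primeFactors_mul (by omega) (by omega), ← hc1,
        Nat.primeFactors_pow _ (by omega : q - 1 ≠ 0),
        ← Nat.primeFactors_mul (by omega) (by omega), mul_comm c1 (b1+1), ← key2]
    rw [e1]
  have hrad : rad (1 * c1 * (c1 + 1)) ≤ n * s * b1 := by
    rw [hradeq]
    calc rad (M * b1) ≤ rad M * rad b1 := rad_mul_le (by omega) (by omega)
      _ ≤ rad n * rad (s ^ n) * rad b1 := by
          exact Nat.mul_le_mul (rad_mul_le (by omega) (by positivity)) le_rfl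
      _ = rad n * rad s * rad b1 := by rw [rad_pow s (by omega : n ≠ 0)]
      _ ≤ n * s * b1 := by
          exact Nat.mul_le_mul (Nat.mul_le_mul (rad_le (by omega)) (rad_le (by omega)))
            (rad_le (by omega))
  exact ⟨c1, hc1, hc13, hb2c.trans hc1.le, hcM, hM2c, by simpa using hrad⟩

lemma pow9_lt : ∀ n : ℕ, 12 ≤ n → n ^ 9 < 2 ^ (5 * n - 26) := by
  intro n hn
  induction n with
  | zero => omega
  | succ m ih =>
    rcases Nat.lt_or_ge m 12 with h | h
    · have hm : m = 11 := by omega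
      subst hm
      norm_num
    · have ihm := ih h
      have h1 : (12 * (m + 1)) ^ 9 ≤ (13 * m) ^ 9 := Nat.pow_le_pow_left (by omega) 9
      have h1' : 12 ^ 9 * (m + 1) ^ 9 ≤ 13 ^ 9 * m ^ 9 := by
        calc 12 ^ 9 * (m + 1) ^ 9 = (12 * (m + 1)) ^ 9 := by rw [mul_pow]
          _ ≤ (13 * m) ^ 9 := h1
          _ = 13 ^ 9 * m ^ 9 := by rw [mul_pow]
      have h2 : (m + 1) ^ 9 ≤ 3 * m ^ 9 := by
        have h13 : (13 : ℕ) ^ 9 ≤ 3 * 12 ^ 9 := by norm_num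
        have : 12 ^ 9 * (m + 1) ^ 9 ≤ 12 ^ 9 * (3 * m ^ 9) := by
          calc 12 ^ 9 * (m + 1) ^ 9 ≤ 13 ^ 9 * m ^ 9 := h1'
            _ ≤ (3 * 12 ^ 9) * m ^ 9 := Nat.mul_le_mul h13 le_rfl
            _ = 12 ^ 9 * (3 * m ^ 9) := by ring
        exact Nat.le_of_mul_le_mul_left this (by norm_num)
      have hexp : 5 * (m + 1) - 26 = (5 * m - 26) + 5 := by omega
      calc (m + 1) ^ 9 ≤ 3 * m ^ 9 := h2
        _ < 3 * 2 ^ (5 * m - 26) := by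
            exact mul_lt_mul_of_pos_left ihm (by norm_num)
        _ ≤ 2 ^ 5 * 2 ^ (5 * m - 26) := by
            exact Nat.mul_le_mul (by norm_num) le_rfl
        _ = 2 ^ (5 * (m + 1) - 26) := by rw [hexp, pow_add, mul_comm]

lemma smallness {s n b c1 : ℕ} (hs : 2 ≤ s) (hn : 3 ≤ n) (hb : 2 ≤ b)
    (hb2c : b ^ 2 ≤ c1 + 1) (hcM : c1 + 1 ≤ n * s ^ n) (hM2c : n * s ^ n ≤ 2 * c1)
    (h6 : (c1 + 1) ^ 6 < (n * s * (b - 1)) ^ 7) :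
    n ≤ 11 ∧ s ≤ 4096 * 11 ^ 9 := by
  set M := n * s ^ n with hMdef
  have hA : (c1 + 1) ^ 6 < (n * s * b) ^ 7 :=
    lt_of_lt_of_le h6 (Nat.pow_le_pow_left (Nat.mul_le_mul le_rfl (by omega)) 7)
  have hC : M ^ 6 < 64 * (n * s * b) ^ 7 := by
    calc M ^ 6 ≤ (2 * (c1 + 1)) ^ 6 := Nat.pow_le_pow_left (by omega) 6
      _ = 64 * (c1 + 1) ^ 6 := by rw [mul_pow]; norm_num
      _ < 64 * (n * s * b) ^ 7 := mul_lt_mul_of_pos_left hA (by norm_num)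
  have hD : M ^ 12 < 4096 * (n * s) ^ 14 * (b ^ 2) ^ 7 := by
    calc M ^ 12 = (M ^ 6) ^ 2 := by ring
      _ < (64 * (n * s * b) ^ 7) ^ 2 := Nat.pow_lt_pow_left hC (by norm_num)
      _ = 4096 * (n * s) ^ 14 * (b ^ 2) ^ 7 := by ring
  have hE : (b ^ 2) ^ 7 ≤ M ^ 7 := Nat.pow_le_pow_left (hb2c.trans hcM) 7
  have hF : M ^ 5 * M ^ 7 < (4096 * (n * s) ^ 14) * M ^ 7 := by
    calc M ^ 5 * M ^ 7 = M ^ 12 := by ring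
      _ < 4096 * (n * s) ^ 14 * (b ^ 2) ^ 7 := hD
      _ ≤ 4096 * (n * s) ^ 14 * M ^ 7 := Nat.mul_le_mul le_rfl hE
  have hG : M ^ 5 < 4096 * (n * s) ^ 14 := Nat.lt_of_mul_lt_mul_right hF
  have hH : s ^ (n * 5) * n ^ 5 < (4096 * n ^ 9 * s ^ 14) * n ^ 5 := by
    have e : M ^ 5 = s ^ (n * 5) * n ^ 5 := by rw [hMdef, mul_pow, ← pow_mul]; ring
    have e2 : 4096 * (n * s) ^ 14 = (4096 * n ^ 9 * s ^ 14) * n ^ 5 := by ring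
    rw [e, e2] at hG
    exact hG
  have hI : s ^ (n * 5) < 4096 * n ^ 9 * s ^ 14 := Nat.lt_of_mul_lt_mul_right hH
  have hJ : s ^ (n * 5 - 14) < 4096 * n ^ 9 := by
    have e : s ^ (n * 5) = s ^ (n * 5 - 14) * s ^ 14 := by rw [← pow_add]; congr 1; omega
    rw [e] at hI
    exact Nat.lt_of_mul_lt_mul_right hI
  have hn11 : n ≤ 11 := by
    by_contra hn12
    push_neg at hn12
    have h2p : 2 ^ (n * 5 - 14) ≤ s ^ (n * 5 - 14) := Nat.pow_le_pow_left hs _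
    have h9 : n ^ 9 < 2 ^ (5 * n - 26) := pow9_lt n (by omega)
    have hlt : 2 ^ (n * 5 - 14) < 4096 * 2 ^ (5 * n - 26) := by
      calc 2 ^ (n * 5 - 14) ≤ s ^ (n * 5 - 14) := h2p
        _ < 4096 * n ^ 9 := hJ
        _ ≤ 4096 * 2 ^ (5 * n - 26) := Nat.mul_le_mul le_rfl h9.le
    have e : (4096 : ℕ) * 2 ^ (5 * n - 26) = 2 ^ (n * 5 - 14) := by
      rw [show (4096 : ℕ) = 2 ^ 12 by norm_num, ← pow_add]
      congr 1
      omega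
    omega
  refine ⟨hn11, ?_⟩
  have h1 : s ≤ s ^ (n * 5 - 14) := Nat.le_self_pow (by omega) s
  have h2 : s < 4096 * n ^ 9 := lt_of_le_of_lt h1 hJ
  have h3 : (4096 : ℕ) * n ^ 9 ≤ 4096 * 11 ^ 9 :=
    Nat.mul_le_mul le_rfl (Nat.pow_le_pow_left hn11 9)
  omega

lemma six_seven {c r : ℕ} (h : (c : ℝ) < (r : ℝ) ^ ((7 : ℝ) / 6)) : c ^ 6 < r ^ 7 := by
  have h6R : ((c : ℝ)) ^ (6 : ℕ) < ((r : ℝ) ^ ((7 : ℝ) / 6)) ^ (6 : ℕ) :=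
    pow_lt_pow_left₀ h (Nat.cast_nonneg c) (by norm_num)
  have e : ((r : ℝ) ^ ((7 : ℝ) / 6)) ^ (6 : ℕ) = (r : ℝ) ^ (7 : ℕ) := by
    rw [← Real.rpow_natCast ((r : ℝ) ^ ((7 : ℝ) / 6)) 6, ← Real.rpow_mul (Nat.cast_nonneg r),
      ← Real.rpow_natCast (r : ℝ) 7]
    norm_num
  rw [e] at h6R
  exact_mod_cast h6R

lemma box_finite (K : ℕ) :
    {t : ℕ × ℕ × ℕ × ℕ | t.1 ≤ K ∧ t.2.1 ≤ K ∧ t.2.2.1 ≤ K ∧ t.2.2.2 ≤ K}.Finite := by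
  apply Set.Finite.subset ((Set.finite_Iic K).prod ((Set.finite_Iic K).prod
    ((Set.finite_Iic K).prod (Set.finite_Iic K))))
  intro t ht
  exact ⟨ht.1, ht.2.1, ht.2.2.1, ht.2.2.2⟩

lemma coords_le {s n b q c1 : ℕ} (hs : 2 ≤ s) (hn : 3 ≤ n) (hb : 2 ≤ b) (hq : 3 ≤ q)
    (hceq : b ^ (q - 1) = c1 + 1) (hb2c : b ^ 2 ≤ c1 + 1) (hcM : c1 + 1 ≤ n * s ^ n) :
    s ≤ n * s ^ n ∧ n ≤ n * s ^ n ∧ b ≤ n * s ^ n ∧ q ≤ n * s ^ n := by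
  have hsn : s ≤ s ^ n := Nat.le_self_pow (by omega) s
  have h1 : s ≤ n * s ^ n := hsn.trans (Nat.le_mul_of_pos_left _ (by omega))
  have h2 : n ≤ n * s ^ n := Nat.le_mul_of_pos_right _ (by positivity)
  have h3 : b ≤ n * s ^ n := by
    have : b ≤ b ^ 2 := Nat.le_self_pow (by omega) b
    omega
  have h4 : q ≤ n * s ^ n := by
    have hq2 : q - 1 < 2 ^ (q - 1) := Nat.lt_two_pow_self
    have hq3 : 2 ^ (q - 1) ≤ b ^ (q - 1) := Nat.pow_le_pow_left hb _
    omega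
  exact ⟨h1, h2, h3, h4⟩

theorem stmt_11
    (habc : {t : ℕ × ℕ × ℕ | 0 < t.1 ∧ 0 < t.2.1 ∧ Nat.Coprime t.1 t.2.1 ∧
        t.1 + t.2.1 = t.2.2 ∧
        ((t.2.2 : ℝ) ≥ (rad (t.1 * t.2.1 * t.2.2) : ℝ) ^ ((7 : ℝ) / 6))}.Finite) :
    {t : ℕ × ℕ × ℕ × ℕ | 2 ≤ t.1 ∧ 3 ≤ t.2.1 ∧ 2 ≤ t.2.2.1 ∧ 3 ≤ t.2.2.2 ∧
      (t.2.1 * t.1 ^ t.2.1 + 1) * (t.2.2.1 - 1) = t.2.2.1 ^ t.2.2.2 - 1}.Finite := by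
  classical
  set F := {t : ℕ × ℕ × ℕ | 0 < t.1 ∧ 0 < t.2.1 ∧ Nat.Coprime t.1 t.2.1 ∧
        t.1 + t.2.1 = t.2.2 ∧
        ((t.2.2 : ℝ) ≥ (rad (t.1 * t.2.1 * t.2.2) : ℝ) ^ ((7 : ℝ) / 6))} with hF
  set KK : ℕ := 11 * (4096 * 11 ^ 9) ^ 11 with hKK
  apply Set.Finite.subset
    (Set.Finite.union
      (Set.Finite.biUnion habc (fun y _ =>
        box_finite (2 * y.2.2)))
      (box_finite KK))
  rintro ⟨s, n, b, q⟩ ⟨hs, hn, hb, hq, heq⟩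
  simp only [Set.mem_setOf_eq] at hs hn hb hq heq ⊢
  obtain ⟨c1, hceq, hc13, hb2c, hcM, hM2c, hrad⟩ := facts hs hn hb hq heq
  obtain ⟨hcs, hcn, hcb, hcq⟩ := coords_le hs hn hb hq hceq hb2c hcM
  by_cases hmem : ((1 : ℕ), c1, c1 + 1) ∈ F
  · left
    refine Set.mem_biUnion hmem ?_
    show s ≤ 2 * (c1 + 1) ∧ n ≤ 2 * (c1 + 1) ∧ b ≤ 2 * (c1 + 1) ∧ q ≤ 2 * (c1 + 1)
    exact ⟨by omega, by omega, by omega, by omega⟩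
  · right
    have hlt : ((c1 + 1 : ℕ) : ℝ) < (rad (1 * c1 * (c1 + 1)) : ℝ) ^ ((7 : ℝ) / 6) := by
      by_contra hge
      push_neg at hge
      exact hmem ⟨Nat.one_pos, show 0 < c1 by omega, Nat.coprime_one_left _,
        show 1 + c1 = c1 + 1 from Nat.add_comm 1 c1, hge⟩
    have h6 : (c1 + 1) ^ 6 < (n * s * (b - 1)) ^ 7 :=
      lt_of_lt_of_le (six_seven hlt) (Nat.pow_le_pow_left hrad 7)
    obtain ⟨hn11, hsK⟩ := smallness hs hn hb hb2c hcM hM2c h6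
    have hMK : n * s ^ n ≤ KK := by
      rw [hKK]
      have h1 : s ^ n ≤ (4096 * 11 ^ 9) ^ n := Nat.pow_le_pow_left hsK n
      have h2 : (4096 * 11 ^ 9) ^ n ≤ (4096 * 11 ^ 9) ^ 11 :=
        Nat.pow_le_pow_right (by positivity) hn11
      calc n * s ^ n ≤ 11 * s ^ n := Nat.mul_le_mul hn11 le_rfl
        _ ≤ 11 * (4096 * 11 ^ 9) ^ 11 := Nat.mul_le_mul le_rfl (h1.trans h2)
    show s ≤ KK ∧ n ≤ KK ∧ b ≤ KK ∧ q ≤ KK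
    exact ⟨by omega, by omega, by omega, by omega⟩
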